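/- If λ and μ are partitions of length m with |λ| = |μ|, then K^{B_m}_{λ,μ}(q) = K^{C_m}_{λ,μ}(q) = K^{D_m}_{λ,μ}(q) = K^{A_m}_{λ,μ}(q): the Kostka–Foulkes polynomials of types B_m, C_m and D_m coincide with the Kostka–Foulkes polynomial of type A_m. -/

import Mathlib

open scoped BigOperators

noncomputable section

/-- Integral weights of rank `m`, identified with `ℤ^m`. -/
abbrev Wt (m : ℕ) := Fin m → ℤ

/-- Rational weights of rank `m` (needed for the half-integral `ρ` of type `B`). -/
abbrev QWt (m : ℕ) := Fin m → ℚ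

/-- Coercion of an integral weight to a rational weight. -/
def castWt {m : ℕ} (β : Wt m) : QWt m := fun i => (β i : ℚ)

/-- The standard basis vector `ε_i` of `ℤ^m`. -/
def eps {m : ℕ} (i : Fin m) : Wt m := fun j => if j = i then 1 else 0

/-- `ρ_m = (m, m-1, ..., 1)`. -/
def rhoZ (m : ℕ) : Wt m := fun i => (m : ℤ) - (i : ℕ)

/-- `κ_m = (1, ..., 1)`. -/
def kappa (m : ℕ) : Wt m := fun _ => 1

/-- A partition of length `m`: a weakly decreasing element of `ℕ^m` (written in `ℤ^m`). -/
def IsPart {m : ℕ} (lam : Wt m) : Prop := Antitone lam ∧ ∀ i, 0 ≤ lam i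

/-- `|λ| = λ_1 + ⋯ + λ_m`. -/
def wtSum {m : ℕ} (lam : Wt m) : ℤ := ∑ i, lam i

/-- The conjugate partition, regarded as a partition of length `n`:
`λ'_j = #{i : λ_i ≥ j}` (with `j` one-based). -/
def conj {m : ℕ} (n : ℕ) (lam : Wt m) : Wt n :=
  fun j => ((Finset.univ.filter (fun i : Fin m => ((j : ℕ) : ℤ) < lam i)).card : ℤ)

/-- The permutation action of `S_m` on `ℤ^m`. -/
def pact {m : ℕ} (σ : Equiv.Perm (Fin m)) (β : Wt m) : Wt m := β ∘ σ.symm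

/-- The permutation action of `S_m` on `ℚ^m`. -/
def qpact {m : ℕ} (σ : Equiv.Perm (Fin m)) (β : QWt m) : QWt m := β ∘ σ.symm

/-- The dot action `σ ∘ α = σ(α + ρ_m) - ρ_m`. -/
def dotAct {m : ℕ} (σ : Equiv.Perm (Fin m)) (α : Wt m) : Wt m :=
  pact σ (α + rhoZ m) - rhoZ m

/-- The three root-system types considered in the paper. -/
inductive RT | B | C | D
deriving DecidableEq

/-- The action of a signed permutation `(σ, ε)` on `ℚ^m`: the hyperoctahedral group
`W_{B_m} = W_{C_m}` consists of all such pairs. -/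
def sact {m : ℕ} (σ : Equiv.Perm (Fin m)) (ε : Fin m → Bool) (β : QWt m) : QWt m :=
  fun i => (if ε i then -1 else 1) * β (σ.symm i)

/-- `(-1)^{l(w)}` for a signed permutation `w = (σ, ε)`: the sign character of the
hyperoctahedral group, which takes value `-1` on each Coxeter generator. -/
def ssign {m : ℕ} (σ : Equiv.Perm (Fin m)) (ε : Fin m → Bool) : ℤ :=
  (Equiv.Perm.sign σ : ℤ) * ∏ i, (if ε i then -1 else 1)

/-- Which signed permutations belong to the Weyl group of type `g`: for `B` and `C` all of
them, for `D` only those changing an even number of signs. -/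
def allowed (g : RT) {m : ℕ} (ε : Fin m → Bool) : Prop :=
  g = RT.D → (∏ i, (if ε i then (-1 : ℤ) else 1)) = 1

instance (g : RT) {m : ℕ} : DecidablePred (allowed g (m := m)) := by
  unfold allowed; infer_instance

/-- The Laurent polynomial ring `ℤ[x_1^{±1/2}, ..., x_m^{±1/2}]` (allowing all rational
exponents), realized as the group algebra of `ℚ^m`. -/
abbrev LQ (m : ℕ) := AddMonoidAlgebra ℤ (QWt m)

/-- The monomial `x^β`. -/
def XQ {m : ℕ} (β : QWt m) : LQ m := AddMonoidAlgebra.single β 1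

instance {m : ℕ} : IsDomain (LQ m) := NoZeroDivisors.to_isDomain _

/-- The fraction field of the Laurent polynomial ring, in which Schur functions live. -/
abbrev KK (m : ℕ) := FractionRing (LQ m)

def toK {m : ℕ} (p : LQ m) : KK m := algebraMap (LQ m) (KK m) p

/-- The half-sum of positive roots: `ρ_B = ρ_m - (1/2,…,1/2)`, `ρ_C = ρ_m`,
`ρ_D = ρ_m - (1,…,1)`. -/
def rhoG (g : RT) (m : ℕ) : QWt m :=
  match g with
  | RT.B => fun i => ((m : ℚ) - (i : ℕ)) - 1/2
  | RT.C => fun i => (m : ℚ) - (i : ℕ)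
  | RT.D => fun i => ((m : ℚ) - (i : ℕ)) - 1

/-- `a_β = Σ_{w ∈ W_g} (-1)^{l(w)} x^{w(β)}`. -/
def aalt (g : RT) {m : ℕ} (β : QWt m) : LQ m :=
  ∑ σ : Equiv.Perm (Fin m), ∑ ε ∈ Finset.univ.filter (allowed g),
    ssign σ ε • XQ (sact σ ε β)

/-- The Schur function `s_ν^g = a_{ν+ρ_g} / a_{ρ_g}`. -/
def SchurF (g : RT) {m : ℕ} (ν : QWt m) : KK m :=
  toK (aalt g (ν + rhoG g m)) / toK (aalt g (rhoG g m))

/-- The one-row weight `(k, 0, …, 0)`. -/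
def rowWt (m : ℕ) (k : ℤ) : QWt m := fun i => if (i : ℕ) = 0 then (k : ℚ) else 0

/-- The one-column weight `(1^p, 0^{m-p})`. -/
def colWt (m : ℕ) (p : ℤ) : QWt m := fun i => if ((i : ℕ) : ℤ) < p then 1 else 0

/-- `h_k^g = s_{(k,0,…,0)}^g` for `k ≥ 0`, and `0` for `k < 0`. -/
def hF (g : RT) (m : ℕ) (k : ℤ) : KK m := if 0 ≤ k then SchurF g (rowWt m k) else 0

/-- `H_k^g = h_k^g + h_{k-2}^g + ⋯ + h_{k mod 2}^g` for `k ≥ 0`, and `0` for `k < 0`. -/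
def HF (g : RT) (m : ℕ) (k : ℤ) : KK m :=
  if 0 ≤ k then ∑ j ∈ Finset.range (k.toNat / 2 + 1), hF g m (k - 2 * j) else 0

/-- `e_p^g = s^g_{(1^p,0^{m-p})}` for `0 ≤ p ≤ m`, `e_p^g = e^g_{2m-p}` for `m < p ≤ 2m`,
and `0` otherwise. -/
def eF (g : RT) (m : ℕ) (p : ℤ) : KK m :=
  if 0 ≤ p ∧ p ≤ (m : ℤ) then SchurF g (colWt m p)
  else if (m : ℤ) < p ∧ p ≤ 2 * m then SchurF g (colWt m (2 * m - p))
  else 0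

/-- `E_k^g = e_k^g + e_{k-2}^g + ⋯ + e_{k mod 2}^g` for `k ≥ 0`, and `0` for `k < 0`. -/
def EF (g : RT) (m : ℕ) (k : ℤ) : KK m :=
  if 0 ≤ k then ∑ j ∈ Finset.range (k.toNat / 2 + 1), eF g m (k - 2 * j) else 0

/-- The `m × m` determinant `u_α^g` (in the one-row characters `h^g`). -/
def uDet (g : RT) {m : ℕ} (α : Wt m) : KK m :=
  Matrix.det (Matrix.of fun i j : Fin m =>
    if (j : ℕ) = 0 then hF g m (α i - (i : ℕ))
    else hF g m (α i - (i : ℕ) + (j : ℕ)) + hF g m (α i - (i : ℕ) - (j : ℕ)))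

/-- The `n × n` determinant `v_β^g` (in the one-column characters `e^g` of rank `m`). -/
def vDet (g : RT) (m : ℕ) {n : ℕ} (β : Wt n) : KK m :=
  Matrix.det (Matrix.of fun i j : Fin n =>
    if (j : ℕ) = 0 then eF g m (β i - (i : ℕ))
    else eF g m (β i - (i : ℕ) + (j : ℕ)) + eF g m (β i - (i : ℕ) - (j : ℕ)))

/-- `h_α^g = h^g_{α_1} ⋯ h^g_{α_m}` (and similarly for arbitrary index length). -/
def hProd (g : RT) (m : ℕ) {n : ℕ} (α : Wt n) : KK m := ∏ i, hF g m (α i)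

def HProd (g : RT) (m : ℕ) {n : ℕ} (α : Wt n) : KK m := ∏ i, HF g m (α i)

def eProd (g : RT) (m : ℕ) {n : ℕ} (α : Wt n) : KK m := ∏ i, eF g m (α i)

def EProd (g : RT) (m : ℕ) {n : ℕ} (α : Wt n) : KK m := ∏ i, EF g m (α i)

/-- The Laurent polynomial ring `ℤ[x_1^{±1}, ..., x_m^{±1}]`, realized as the group
algebra of `ℤ^m`. -/
abbrev LZ (m : ℕ) := AddMonoidAlgebra ℤ (Wt m)

/-- The monomial `x^β`. -/
def XZ {m : ℕ} (β : Wt m) : LZ m := AddMonoidAlgebra.single β 1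

/-- `φ_m = ∏_{1≤i<j≤m} (1 - x_i/x_j) · ∏_{1≤r<s≤m} (1 - 1/(x_r x_s))`; its coefficients
are the function `a` (resp. `f_{q=1}` up to expansion conventions). -/
def phiSmall (m : ℕ) : LZ m :=
  (∏ p ∈ Finset.univ.filter (fun p : Fin m × Fin m => p.1 < p.2),
      (1 - XZ (eps p.1 - eps p.2))) *
  (∏ p ∈ Finset.univ.filter (fun p : Fin m × Fin m => p.1 < p.2),
      (1 - XZ (-(eps p.1 + eps p.2))))

/-- `Φ_m = ∏_{1≤i<j≤m} (1 - x_i/x_j) · ∏_{1≤r≤s≤m} (1 - 1/(x_r x_s))`. -/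
def phiBig (m : ℕ) : LZ m :=
  (∏ p ∈ Finset.univ.filter (fun p : Fin m × Fin m => p.1 < p.2),
      (1 - XZ (eps p.1 - eps p.2))) *
  (∏ p ∈ Finset.univ.filter (fun p : Fin m × Fin m => p.1 ≤ p.2),
      (1 - XZ (-(eps p.1 + eps p.2))))

/-- The coefficient `a(γ)` of `x^γ` in `φ_m`. -/
def coeffSmall (m : ℕ) (γ : Wt m) : ℤ := (phiSmall m).coeff γ

/-- The coefficient `A(γ)` of `x^γ` in `Φ_m`. -/
def coeffBig (m : ℕ) (γ : Wt m) : ℤ := (phiBig m).coeff γ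

/-- The generic `q`-partition function attached to a finite family `v` of vectors:
the coefficient of `q^d` counts the families `(n_i)` of nonnegative integers with
`Σ n_i = d` and `Σ n_i v_i = β`.  This encodes the coefficient of `x^β` in the formal
series expansion of `∏_i (1 - q x^{v_i})^{-1}` as a power series in `q`. -/
def PqPS {m : ℕ} {ι : Type} [Fintype ι] (v : ι → Wt m) (β : QWt m) : PowerSeries ℤ :=
  PowerSeries.mk fun d =>
    (Nat.card {n : ι → ℕ // (∑ i, n i) = d ∧ castWt (∑ i, (n i : ℤ) • v i) = β} : ℤ)

/-- The specialization at `q = 1` of `PqPS`: the number of ways to write `β` as a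
nonnegative integral combination of the vectors `v_i`. -/
def POne {m : ℕ} {ι : Type} [Fintype ι] (v : ι → Wt m) (β : Wt m) : ℤ :=
  (Nat.card {n : ι → ℕ // (∑ i, (n i : ℤ) • v i) = β} : ℤ)

/-- Index type for the pairs `1 ≤ i < j ≤ m`. -/
abbrev IdxLT (m : ℕ) := {p : Fin m × Fin m // p.1 < p.2}

/-- Index type for the pairs `1 ≤ i ≤ j ≤ m`. -/
abbrev IdxLE (m : ℕ) := {p : Fin m × Fin m // p.1 ≤ p.2}

/-- The positive roots `ε_i - ε_j` (`i < j`) of type `A_m`. -/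
def rootsA (m : ℕ) : IdxLT m → Wt m := fun p => eps p.1.1 - eps p.1.2

/-- The positive roots of type `B_m`. -/
def rootsB (m : ℕ) : IdxLT m ⊕ IdxLT m ⊕ Fin m → Wt m
  | .inl p => eps p.1.1 - eps p.1.2
  | .inr (.inl p) => eps p.1.1 + eps p.1.2
  | .inr (.inr i) => eps i

/-- The positive roots of type `C_m` (note `2ε_i = ε_i + ε_i`). -/
def rootsC (m : ℕ) : IdxLT m ⊕ IdxLE m → Wt m
  | .inl p => eps p.1.1 - eps p.1.2
  | .inr p => eps p.1.1 + eps p.1.2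

/-- The positive roots of type `D_m`. -/
def rootsD (m : ℕ) : IdxLT m ⊕ IdxLT m → Wt m
  | .inl p => eps p.1.1 - eps p.1.2
  | .inr p => eps p.1.1 + eps p.1.2

/-- The vectors `ε_i - ε_j` (`i < j`) and `-(ε_r + ε_s)` (`r < s`), whose `q`-partition
function is `f_q`. -/
def vfSmall (m : ℕ) : IdxLT m ⊕ IdxLT m → Wt m
  | .inl p => eps p.1.1 - eps p.1.2
  | .inr p => -(eps p.1.1 + eps p.1.2)

/-- The vectors `ε_i - ε_j` (`i < j`) and `-(ε_r + ε_s)` (`r ≤ s`), whose `q`-partition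
function is `F_q`. -/
def vfBig (m : ℕ) : IdxLT m ⊕ IdxLE m → Wt m
  | .inl p => eps p.1.1 - eps p.1.2
  | .inr p => -(eps p.1.1 + eps p.1.2)

/-- `f_q`. -/
def fq {m : ℕ} (β : Wt m) : PowerSeries ℤ := PqPS (vfSmall m) (castWt β)

/-- `F_q`. -/
def Fq {m : ℕ} (β : Wt m) : PowerSeries ℤ := PqPS (vfBig m) (castWt β)

/-- The `q`-analogue of Kostant's partition function, type `A_m`. -/
def PqA {m : ℕ} (β : QWt m) : PowerSeries ℤ := PqPS (rootsA m) β

/-- The `q`-analogue of Kostant's partition function, types `B_m`, `C_m`, `D_m`. -/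
def PqG (g : RT) {m : ℕ} (β : QWt m) : PowerSeries ℤ :=
  match g with
  | RT.B => PqPS (rootsB m) β
  | RT.C => PqPS (rootsC m) β
  | RT.D => PqPS (rootsD m) β

/-- The Kostka–Foulkes polynomial
`K^g_{λ,μ}(q) = Σ_{w ∈ W_g} (-1)^{l(w)} P_q^g(w(λ+ρ_g) - (μ+ρ_g))`. -/
def KF (g : RT) {m : ℕ} (lam mu : QWt m) : PowerSeries ℤ :=
  ∑ σ : Equiv.Perm (Fin m), ∑ ε ∈ Finset.univ.filter (allowed g),
    ssign σ ε • PqG g (sact σ ε (lam + rhoG g m) - (mu + rhoG g m))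

/-- The Kostka–Foulkes polynomial of type `A_m`,
`K^{A_m}_{λ,γ}(q) = Σ_{σ ∈ S_m} (-1)^{l(σ)} P_q^{A_m}(σ(λ+ρ_m) - (γ+ρ_m))`,
defined for arbitrary `γ ∈ ℤ^m`. -/
def KFA {m : ℕ} (lam gamma : Wt m) : PowerSeries ℤ :=
  ∑ σ : Equiv.Perm (Fin m),
    (Equiv.Perm.sign σ : ℤ) • PqA (castWt (pact σ (lam + rhoZ m) - (gamma + rhoZ m)))

/-- `u_{λ,μ}(q) = Σ_{σ ∈ S_m} (-1)^{l(σ)} f_q(σ(λ+ρ_m) - μ - ρ_m)`. -/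
def uP {m : ℕ} (lam mu : Wt m) : PowerSeries ℤ :=
  ∑ σ : Equiv.Perm (Fin m),
    (Equiv.Perm.sign σ : ℤ) • fq (pact σ (lam + rhoZ m) - mu - rhoZ m)

/-- `U_{λ,μ}(q) = Σ_{σ ∈ S_m} (-1)^{l(σ)} F_q(σ(λ+ρ_m) - μ - ρ_m)`. -/
def UP {m : ℕ} (lam mu : Wt m) : PowerSeries ℤ :=
  ∑ σ : Equiv.Perm (Fin m),
    (Equiv.Perm.sign σ : ℤ) • Fq (pact σ (lam + rhoZ m) - mu - rhoZ m)

/-- `f_q` specialized at `q = 1`. -/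
def fOne {m : ℕ} (β : Wt m) : ℤ := POne (vfSmall m) β

/-- `F_q` specialized at `q = 1`. -/
def FOne {m : ℕ} (β : Wt m) : ℤ := POne (vfBig m) β

/-- `u_{λ,μ}(1)`. -/
def uP1 {m : ℕ} (lam mu : Wt m) : ℤ :=
  ∑ σ : Equiv.Perm (Fin m),
    (Equiv.Perm.sign σ : ℤ) * fOne (pact σ (lam + rhoZ m) - mu - rhoZ m)

/-- `U_{λ,μ}(1)`. -/
def UP1 {m : ℕ} (lam mu : Wt m) : ℤ :=
  ∑ σ : Equiv.Perm (Fin m),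
    (Equiv.Perm.sign σ : ℤ) * FOne (pact σ (lam + rhoZ m) - mu - rhoZ m)

/-- `λ̂ = (n - λ_m, …, n - λ_1)`. -/
def hatP {m : ℕ} (n : ℤ) (lam : Wt m) : Wt m := fun i => n - lam i.rev

/-- The involution `I(α_1, …, α_m) = (-α_m, …, -α_1)`. -/
def invI {m : ℕ} (α : Wt m) : Wt m := fun i => -α i.rev

/-- `σ*`, defined by `σ*(k) = σ(m - k + 1)`. -/
def starPerm {m : ℕ} (σ : Equiv.Perm (Fin m)) : Equiv.Perm (Fin m) :=
  (Fin.revPerm).trans σ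

/-- The number of ways to write `β = Σ_{1≤r≤s≤m} e_{r,s} (ε_r + ε_s)`, `e_{r,s} ∈ ℕ`. -/
def cC (m : ℕ) (β : Wt m) : ℕ :=
  Nat.card {e : IdxLE m → ℕ // (∑ p, (e p : ℤ) • (eps p.1.1 + eps p.1.2)) = β}

/-- The number of ways to write `β = Σ_{1≤r<s≤m} e_{r,s} (ε_r + ε_s)`, `e_{r,s} ∈ ℕ`. -/
def cD (m : ℕ) (β : Wt m) : ℕ :=
  Nat.card {e : IdxLT m → ℕ // (∑ p, (e p : ℤ) • (eps p.1.1 + eps p.1.2)) = β}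

/-- The set `C_k^m`. -/
def setC (m k : ℕ) : Set (Wt m) :=
  {β | (∃ e : IdxLE m → ℕ, (∑ p, (e p : ℤ) • (eps p.1.1 + eps p.1.2)) = β) ∧
       wtSum β = 2 * k}

/-- The set `D_k^m`. -/
def setD (m k : ℕ) : Set (Wt m) :=
  {β | (∃ e : IdxLT m → ℕ, (∑ p, (e p : ℤ) • (eps p.1.1 + eps p.1.2)) = β) ∧
       wtSum β = 2 * k}


section MyAux

variable {m : ℕ}

lemma sum_eps (i : Fin m) : ∑ x, eps i x = 1 := by
  simp [eps]

lemma sum_castWt (w : Wt m) : ∑ x, castWt w x = ((∑ x, w x : ℤ) : ℚ) := by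
  unfold castWt; push_cast; rfl

lemma sum_comb {ι : Type} [Fintype ι] (v : ι → Wt m) (n : ι → ℕ) :
    ∑ x, (∑ i, (n i : ℤ) • v i) x = ∑ i, (n i : ℤ) * (∑ x, v i x) := by
  simp only [Finset.sum_apply, Pi.smul_apply, smul_eq_mul, Finset.mul_sum]
  exact Finset.sum_comm

lemma PqPS_eq_zero {ι : Type} [Fintype ι] (v : ι → Wt m)
    (hv : ∀ i, 0 ≤ ∑ x, v i x) {β : QWt m} (hβ : ∑ x, β x < 0) :
    PqPS v β = 0 := by
  unfold PqPS
  ext d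
  rw [PowerSeries.coeff_mk, map_zero]
  have hE : IsEmpty {n : ι → ℕ // (∑ i, n i) = d ∧ castWt (∑ i, (n i : ℤ) • v i) = β} := by
    constructor
    rintro ⟨n, -, hn⟩
    have h1 : ∑ x, β x = ((∑ i, (n i : ℤ) * (∑ x, v i x) : ℤ) : ℚ) := by
      rw [← hn, sum_castWt, sum_comb]
    have h2 : (0:ℤ) ≤ ∑ i, (n i : ℤ) * (∑ x, v i x) :=
      Finset.sum_nonneg fun i _ => mul_nonneg (Int.natCast_nonneg _) (hv i)
    rw [h1] at hβ
    exact absurd hβ (not_lt.mpr (by exact_mod_cast h2))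
  rw [Nat.card_of_isEmpty]
  simp

lemma PqPS_split {ι κ : Type} [Fintype ι] [Fintype κ] (v : ι ⊕ κ → Wt m)
    (h0 : ∀ i, ∑ x, v (Sum.inl i) x = 0) (hpos : ∀ j, 0 < ∑ x, v (Sum.inr j) x)
    {β : QWt m} (hβ : ∑ x, β x = 0) :
    PqPS v β = PqPS (fun i => v (Sum.inl i)) β := by
  have key : ∀ n : ι ⊕ κ → ℕ, castWt (∑ i, (n i : ℤ) • v i) = β →
      ∀ j, n (Sum.inr j) = 0 := by
    intro n hn j
    have h1 : ((∑ i, (n i : ℤ) * (∑ x, v i x) : ℤ) : ℚ) = 0 := by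
      rw [← sum_comb, ← sum_castWt, hn, hβ]
    have h2 : ∑ i, (n i : ℤ) * (∑ x, v i x) = 0 := by exact_mod_cast h1
    rw [Fintype.sum_sum_type] at h2
    have h3 : ∑ i : ι, (n (Sum.inl i) : ℤ) * (∑ x, v (Sum.inl i) x) = 0 := by
      apply Finset.sum_eq_zero; intro i _; rw [h0 i, mul_zero]
    rw [h3, zero_add] at h2
    have h4 := (Finset.sum_eq_zero_iff_of_nonneg
      (fun i _ => mul_nonneg (Int.natCast_nonneg _) (le_of_lt (hpos i)))).mp h2 j
      (Finset.mem_univ j)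
    rcases mul_eq_zero.mp h4 with hc | hc
    · exact_mod_cast hc
    · exact absurd hc (ne_of_gt (hpos j))
  unfold PqPS
  apply congrArg PowerSeries.mk
  funext d
  congr 1
  apply Nat.card_congr
  refine ⟨fun p => ⟨fun i => p.1 (Sum.inl i), ?_, ?_⟩,
          fun p => ⟨Sum.elim p.1 0, ?_, ?_⟩, ?_, ?_⟩
  · have := p.2.1
    rw [Fintype.sum_sum_type] at this
    have hz : ∑ j : κ, p.1 (Sum.inr j) = 0 := by
      apply Finset.sum_eq_zero; intro j _; exact key p.1 p.2.2 j
    rw [hz, add_zero] at this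
    exact this
  · have := p.2.2
    rw [Fintype.sum_sum_type] at this
    have hz : ∑ j : κ, (p.1 (Sum.inr j) : ℤ) • v (Sum.inr j) = 0 := by
      apply Finset.sum_eq_zero; intro j _; rw [key p.1 p.2.2 j]; simp
    rw [hz, add_zero] at this
    exact this
  · have := p.2.1
    rw [Fintype.sum_sum_type]
    simpa using this
  · have := p.2.2
    rw [Fintype.sum_sum_type]
    simpa using this
  · intro p
    apply Subtype.ext
    funext i
    cases i with
    | inl i => rfl
    | inr j => exact (key p.1 p.2.2 j).symm
  · intro p
    apply Subtype.ext
    rfl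

lemma sum_roots_fst (a b : Fin m) : ∑ x, (eps a - eps b) x = 0 := by
  simp only [Pi.sub_apply, Finset.sum_sub_distrib, sum_eps, sub_self]

lemma sum_roots_snd (a b : Fin m) : ∑ x, (eps a + eps b) x = 2 := by
  simp only [Pi.add_apply, Finset.sum_add_distrib, sum_eps]
  norm_num

lemma PqG_zero (g : RT) {β : QWt m} (hβ : ∑ x, β x < 0) : PqG g β = 0 := by
  cases g
  · exact PqPS_eq_zero (rootsB m) (by
      rintro (p | p | i) <;>
        simp only [rootsB, sum_roots_fst, sum_roots_snd, sum_eps] <;> norm_num) hβ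
  · exact PqPS_eq_zero (rootsC m) (by
      rintro (p | p) <;>
        simp only [rootsC, sum_roots_fst, sum_roots_snd] <;> norm_num) hβ
  · exact PqPS_eq_zero (rootsD m) (by
      rintro (p | p) <;>
        simp only [rootsD, sum_roots_fst, sum_roots_snd] <;> norm_num) hβ

lemma PqG_eq_PqA (g : RT) {β : QWt m} (hβ : ∑ x, β x = 0) : PqG g β = PqA β := by
  cases g
  · have := PqPS_split (rootsB m)
      (fun p => sum_roots_fst p.1.1 p.1.2)
      (by rintro (p | i) <;> simp only [rootsB, sum_roots_snd, sum_eps] <;> norm_num) hβ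
    exact this
  · have := PqPS_split (rootsC m)
      (fun p => sum_roots_fst p.1.1 p.1.2)
      (by rintro p; simp only [rootsC, sum_roots_snd]; norm_num) hβ
    exact this
  · have := PqPS_split (rootsD m)
      (fun p => sum_roots_fst p.1.1 p.1.2)
      (by rintro p; simp only [rootsD, sum_roots_snd]; norm_num) hβ
    exact this

lemma sum_sact_sub (σ : Equiv.Perm (Fin m)) (ε : Fin m → Bool) (γ δ : QWt m)
    (hγδ : ∑ i, γ i = ∑ i, δ i) :
    ∑ i, (sact σ ε γ - δ) i = ∑ j, (if ε (σ j) then (-2:ℚ) else 0) * γ j := by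
  have h1 : ∑ i, sact σ ε γ i = ∑ j, (if ε (σ j) then (-1:ℚ) else 1) * γ j := by
    rw [← Equiv.sum_comp σ (fun i => sact σ ε γ i)]
    apply Finset.sum_congr rfl
    intro j _
    simp [sact]
  simp only [Pi.sub_apply]
  rw [Finset.sum_sub_distrib, h1, ← hγδ, ← Finset.sum_sub_distrib]
  apply Finset.sum_congr rfl
  intro j _
  split <;> ring

lemma sum_if_neg (γ : Fin m → ℚ) (η : Fin m → Bool)
    (hnn : ∀ j, 0 ≤ γ j) (hex : ∃ j, η j = true ∧ 0 < γ j) :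
    ∑ j, (if η j then (-2:ℚ) else 0) * γ j < 0 := by
  have heq : ∑ j, (if η j then (-2:ℚ) else 0) * γ j
      = -∑ j, (if η j then (2:ℚ) else 0) * γ j := by
    rw [← Finset.sum_neg_distrib]
    apply Finset.sum_congr rfl
    intro j _
    split <;> ring
  rw [heq, neg_lt_zero]
  apply Finset.sum_pos'
  · intro j _
    split
    · linarith [hnn j]
    · simp
  · obtain ⟨j, hj, hγj⟩ := hex
    exact ⟨j, Finset.mem_univ j, by rw [if_pos hj]; linarith⟩

lemma exists_two (η : Fin m → Bool) (hne : ∃ j, η j = true)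
    (hpar : (∏ j, (if η j then (-1:ℤ) else 1)) = 1) :
    ∃ a b : Fin m, a ≠ b ∧ η a = true ∧ η b = true := by
  classical
  set T := Finset.univ.filter (fun j => η j = true) with hT
  have hprod : (∏ j, (if η j then (-1:ℤ) else 1)) = (-1) ^ T.card := by
    rw [← Finset.prod_filter_mul_prod_filter_not Finset.univ (fun j => η j = true)]
    have e1 : ∏ j ∈ T, (if η j then (-1:ℤ) else 1) = (-1) ^ T.card := by
      rw [Finset.prod_congr rfl (g := fun _ => (-1:ℤ))
        (fun j hj => by rw [if_pos (Finset.mem_filter.mp hj).2]), Finset.prod_const]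
    have e2 : ∏ j ∈ Finset.univ.filter (fun j => ¬ η j = true),
        (if η j then (-1:ℤ) else 1) = 1 := by
      apply Finset.prod_eq_one
      intro j hj
      rw [if_neg (Finset.mem_filter.mp hj).2]
    rw [e1, e2, mul_one]
  rw [hprod] at hpar
  have heven : Even T.card := by
    by_contra hodd
    rw [Odd.neg_one_pow (Nat.not_even_iff_odd.mp hodd)] at hpar
    norm_num at hpar
  obtain ⟨j0, hj0⟩ := hne
  have hj0T : j0 ∈ T := Finset.mem_filter.mpr ⟨Finset.mem_univ j0, hj0⟩
  have hcard : 1 < T.card := by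
    obtain ⟨k, hk⟩ := heven
    have : 0 < T.card := Finset.card_pos.mpr ⟨j0, hj0T⟩
    omega
  obtain ⟨a, ha, b, hb, hab⟩ := Finset.one_lt_card.mp hcard
  exact ⟨a, b, hab, (Finset.mem_filter.mp ha).2, (Finset.mem_filter.mp hb).2⟩

lemma kf_eq (g : RT) (lam mu : Wt m) (hlam : IsPart lam) (hmu : IsPart mu)
    (h : wtSum lam = wtSum mu) :
    KF g (castWt lam) (castWt mu) = KFA lam mu := by
  classical
  unfold KF KFA
  set γ : QWt m := castWt lam + rhoG g m with hγ
  set δ : QWt m := castWt mu + rhoG g m with hδ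
  have hγδ : ∑ i, γ i = ∑ i, δ i := by
    have h' : ∑ i, castWt lam i = ∑ i, castWt mu i := by
      rw [sum_castWt, sum_castWt]
      unfold wtSum at h
      exact_mod_cast h
    simp only [hγ, hδ, Pi.add_apply, Finset.sum_add_distrib, h']
  have hγnn : ∀ j, 0 ≤ γ j := by
    intro j
    have hl : (0:ℚ) ≤ castWt lam j := by
      unfold castWt; exact_mod_cast hlam.2 j
    have hjm : ((j : ℕ) : ℚ) + 1 ≤ m := by
      have hj' : (j : ℕ) + 1 ≤ m := j.isLt
      exact_mod_cast hj'
    cases g <;> simp only [hγ, Pi.add_apply, rhoG] <;> linarith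
  have hγpos : ∀ j : Fin m, ((j : ℕ) + 1 < m ∨ g ≠ RT.D) → 0 < γ j := by
    intro j hj
    have hl : (0:ℚ) ≤ castWt lam j := by
      unfold castWt; exact_mod_cast hlam.2 j
    have hjm : ((j : ℕ) : ℚ) + 1 ≤ m := by
      have hj' : (j : ℕ) + 1 ≤ m := j.isLt
      exact_mod_cast hj'
    cases g with
    | B => simp only [hγ, Pi.add_apply, rhoG]; linarith
    | C => simp only [hγ, Pi.add_apply, rhoG]; linarith
    | D =>
      rcases hj with hj | hj
      · have : ((j : ℕ) : ℚ) + 1 < m := by exact_mod_cast hj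
        simp only [hγ, Pi.add_apply, rhoG]; linarith
      · exact absurd rfl hj
  apply Finset.sum_congr rfl
  intro σ _
  have hfalse_mem : (fun _ : Fin m => false) ∈
      Finset.univ.filter (allowed g (m := m)) := by
    simp [allowed]
  have h0 : ∀ ε ∈ Finset.univ.filter (allowed g (m := m)),
      ε ≠ (fun _ => false) →
      ssign σ ε • PqG g (sact σ ε γ - δ) = 0 := by
    intro ε hε hne
    have hi0 : ∃ i, ε i = true := by
      by_contra hc
      push_neg at hc
      exact hne (funext fun i => by simpa using hc i)
    obtain ⟨i0, hi0⟩ := hi0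
    have hzero : PqG g (sact σ ε γ - δ) = 0 := by
      apply PqG_zero
      rw [sum_sact_sub σ ε γ δ hγδ]
      apply sum_if_neg γ (fun j => ε (σ j)) hγnn
      by_cases hg : g = RT.D
      · subst hg
        have hpar : (∏ j, (if ε (σ j) then (-1:ℤ) else 1)) = 1 := by
          have := Equiv.prod_comp σ (fun i => if ε i then (-1:ℤ) else 1)
          rw [this]
          have hall := (Finset.mem_filter.mp hε).2
          exact hall rfl
        obtain ⟨a, b, hab, ha, hb⟩ := exists_two (fun j => ε (σ j))
          ⟨σ.symm i0, by simpa using hi0⟩ hpar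
        by_cases hav : (a : ℕ) + 1 < m
        · exact ⟨a, ha, hγpos a (Or.inl hav)⟩
        · have hbv : (b : ℕ) + 1 < m := by
            have h1 := a.isLt
            have h2 := b.isLt
            have h3 : (a : ℕ) ≠ (b : ℕ) := fun hc => hab (Fin.ext hc)
            omega
          exact ⟨b, hb, hγpos b (Or.inl hbv)⟩
      · refine ⟨σ.symm i0, by simpa using hi0, hγpos _ (Or.inr hg)⟩
    rw [hzero, smul_zero]
  rw [Finset.sum_eq_single_of_mem _ hfalse_mem h0]
  have hssign : ssign σ (fun _ : Fin m => false) = (Equiv.Perm.sign σ : ℤ) := by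
    simp [ssign]
  rw [hssign]
  have hs0 : ∑ i, (sact σ (fun _ => false) γ - δ) i = 0 := by
    rw [sum_sact_sub σ _ γ δ hγδ]
    simp
  have hargs : sact σ (fun _ => false) γ - δ
      = castWt (pact σ (lam + rhoZ m) - (mu + rhoZ m)) := by
    funext i
    cases g <;>
      simp only [hγ, hδ, sact, castWt, pact, rhoG, rhoZ, Pi.sub_apply, Pi.add_apply,
        Function.comp_apply, Bool.false_eq_true, if_false, one_mul] <;>
      push_cast <;> ring
  rw [hargs] at hs0
  rw [hargs, PqG_eq_PqA g hs0]

end MyAux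

/-- If `|λ| = |μ|`, the Kostka–Foulkes polynomials of types
`B_m, C_m, D_m` all coincide with the Kostka–Foulkes polynomial of type `A_m`. -/
theorem stmt10 (m : ℕ) (hm : 1 ≤ m) (lam mu : Wt m) (hlam : IsPart lam) (hmu : IsPart mu)
    (h : wtSum lam = wtSum mu) :
    KF RT.B (castWt lam) (castWt mu) = KFA lam mu ∧
    KF RT.C (castWt lam) (castWt mu) = KFA lam mu ∧
    KF RT.D (castWt lam) (castWt mu) = KFA lam mu :=
  ⟨kf_eq RT.B lam mu hlam hmu h, kf_eq RT.C lam mu hlam hmu h, kf_eq RT.D lam mu hlam hmu h⟩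

end
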